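/- The simplicial cochain S_2-algebra S^*(S^1, ℤ) of S^1 = Δ[1]/∂Δ[1] is not weakly equivalent as an S_2-algebra to any commutative dg algebra (regarded as an S_2-algebra with trivial braces); in particular, it is not weakly equivalent as an S_2-algebra to its cohomology H^*(S^1, ℤ). Indeed, for the mod 2 class [x] of the dual of the nondegenerate 1-simplex, the natural operation Sq^0([x]) = [x{x}] equals [x] ≠ 0 in H^1(S^*(S^1, ℤ/2)), while Sq^{n−1} vanishes identically on any commutative algebra with trivial braces. -/

import Mathlib

/-! # Common framework : differential graded algebras, brace ($\mathcal S_2$) algebras,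
dg bialgebras (Hopf algebras), bar and cobar constructions, twisting morphisms. -/

open scoped TensorProduct

noncomputable section

set_option maxHeartbeats 1000000

/-- The Koszul sign `(-1)^n` for `n : ℤ`. -/
def ksgn (n : ℤ) : ℤ := ((Int.negOnePow n : ℤˣ) : ℤ)

/-- Concatenation of a list of lists. -/
def lflat {α : Type} : List (List α) → List α
  | [] => []
  | l :: ls => l ++ lflat ls

/-- All splittings of a list into a prefix and a suffix. -/
def splits2 {α : Type} : List α → List (List α × List α)
  | [] => [([], [])]
  | a :: l => ([], a :: l) :: (splits2 l).map (fun q => (a :: q.1, q.2))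

/-- All ways of merging two adjacent entries of a list using the multiplication. -/
def adjMerges {α : Type} [Mul α] : List α → List (List α)
  | a :: b :: l => ((a * b) :: l) :: (adjMerges (b :: l)).map (fun m => a :: m)
  | _ => []

/-- The terms `(sign exponent, list with `dd` applied in one slot)` appearing when a
degree `-1` operator is applied slotwise to a list of homogeneous elements, with the
Koszul sign exponent accumulating the degrees of the entries passed over. -/
def dSlotTerms {α : Type} (dd : α → α) : ℤ → List (α × ℤ) → List (ℤ × List α)
  | _, [] => []
  | e, (y, b) :: t =>
      (e, dd y :: t.map Prod.fst) :: (dSlotTerms dd (e + b) t).map (fun q => (q.1, y :: q.2))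

/-- Alternating sum `Σ (-1)^(e+k) • l k`. -/
def altSum {M : Type} [AddCommGroup M] : ℤ → List M → M
  | _, [] => 0
  | e, a :: l => ksgn e • a + altSum (e + 1) l

/-- Total degree of a graded word. -/
def wdeg {α : Type} (w : List (α × ℤ)) : ℤ := (w.map Prod.snd).sum

/-- Total suspended degree `Σ (|aᵢ| + 1)` of a graded word. -/
def wdegS {α : Type} (w : List (α × ℤ)) : ℤ := (w.map (fun p => p.2 + 1)).sum

/-- Total desuspended degree `Σ (|aᵢ| - 1)` of a graded word. -/
def wdegC {α : Type} (w : List (α × ℤ)) : ℤ := (w.map (fun p => p.2 - 1)).sum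

/-- All interleavings (with Koszul sign exponents) of the brace arguments `xs` into the
arguments `ys`, used to state the brace associativity identity. -/
def ileave {α : Type} (br : α → List α → α) :
    List (α × ℤ) → List (α × ℤ) → ℤ → List (ℤ × List α)
  | [], ys, _ => [(0, ys.map Prod.fst)]
  | (x, dx) :: xs, ys, acc =>
      lflat ((splits2 ys).map (fun q =>
        lflat ((splits2 q.2).map (fun q' =>
          (ileave br xs q'.2 (acc + wdegS q.1 + wdegS q'.1)).map
            (fun r => (r.1 + (dx + 1) * (acc + wdegS q.1),
              q.1.map Prod.fst ++ br x (q'.1.map Prod.fst) :: r.2))))))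
  termination_by xs => xs.length

/-- `Σ_{i=1}^{k} (k - i) * (wᵢ - 1)`, computed with descending coefficient `j`. -/
def hopfAlphaAux : ℤ → List ℤ → ℤ
  | _, [] => 0
  | j, a :: l => j * (a - 1) + hopfAlphaAux (j - 1) l

/-- The sign exponent `α = k (d₁ - 1) + Σ_{i=1}^k (k - i)(|c̄₂⁽ⁱ⁾| - 1)` from the
definition of Hopf twisting morphisms. -/
def hopfAlpha (d1 : ℤ) (degs : List ℤ) : ℤ :=
  (degs.length : ℤ) * (d1 - 1) + hopfAlphaAux ((degs.length : ℤ) - 1) degs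

/-- Auxiliary accumulator for the cobar first–brace sign. -/
def cbAlphaAux : ℤ → List (ℤ × ℤ) → ℤ
  | _, [] => 0
  | acc, (dxj, dyj) :: l => dxj * acc + cbAlphaAux (acc + (dyj - 1)) l

/-- The sign exponent `α = Σ_{j=2}^q |x⁽ʲ⁾| Σ_{k<j} |[y_k]| + |x| - 1` from the
definition of the first brace on the cobar construction. -/
def cobarAlpha (dx : ℤ) (dxs dys : List ℤ) : ℤ := dx - 1 + cbAlphaAux 0 (dxs.zip dys)

/-- The `dd`-part of the bar differential with its sign exponents `m_i`. -/
def barD1 {α : Type} (dd : α → α) : ℤ → List (α × ℤ) → List (ℤ × List (α × ℤ))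
  | _, [] => []
  | m, (a, i) :: t =>
      (m, (dd a, i - 1) :: t) :: (barD1 dd (m + i + 1) t).map (fun q => (q.1, (a, i) :: q.2))

/-- The merging part of the bar differential with its sign exponents `m_i`. -/
def barD2 {α : Type} [Mul α] : ℤ → List (α × ℤ) → List (ℤ × List (α × ℤ))
  | _, [] => []
  | _, [_] => []
  | m, (a, i) :: (b, j) :: t =>
      (m + i + 1, (a * b, i + j) :: t) ::
        (barD2 (m + i + 1) ((b, j) :: t)).map (fun q => (q.1, (a, i) :: q.2))

/-- An augmented differential graded algebra over `R` (chain complexes have degree `-1`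
differentials; the grading is recorded as an internal direct sum decomposition). -/
structure DGAlgebra (R : Type) [CommRing R] where
  X : Type
  [ringX : Ring X]
  [algX : Algebra R X]
  grading : ℤ → Submodule R X
  isInternal : DirectSum.IsInternal grading
  one_mem : (1 : X) ∈ grading 0
  mul_mem : ∀ {i j : ℤ} {x y : X}, x ∈ grading i → y ∈ grading j → x * y ∈ grading (i + j)
  d : X →ₗ[R] X
  d_mem : ∀ {i : ℤ} {x : X}, x ∈ grading i → d x ∈ grading (i - 1)
  d_sq : ∀ x, d (d x) = 0
  leibniz : ∀ {i : ℤ} {x : X}, x ∈ grading i → ∀ y, d (x * y) = d x * y + ksgn i • (x * d y)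
  aug : X →ₐ[R] R
  aug_d : ∀ x, aug (d x) = 0
  aug_grading : ∀ {i : ℤ} {x : X}, i ≠ 0 → x ∈ grading i → aug x = 0

attribute [instance] DGAlgebra.ringX DGAlgebra.algX

/-- A word with homogeneous entries of the recorded degrees. -/
def HomogW {R : Type} [CommRing R] (A : DGAlgebra R) (w : List (A.X × ℤ)) : Prop :=
  ∀ p ∈ w, p.1 ∈ A.grading p.2

/-- A word with homogeneous entries from the augmentation ideal. -/
def BarW {R : Type} [CommRing R] (A : DGAlgebra R) (w : List (A.X × ℤ)) : Prop :=
  ∀ p ∈ w, p.1 ∈ A.grading p.2 ∧ A.aug p.1 = 0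

/-- Brace operations on an augmented dg algebra, satisfying the Gerstenhaber–Voronov
brace associativity, differential and multiplication identities (with Berger–Fresse type
signs).  This is the structure of an algebra over the surjection operad `S₂`. -/
structure BraceStr {R : Type} [CommRing R] (A : DGAlgebra R) where
  brace : A.X → List A.X → A.X
  brace_nil : ∀ x, brace x [] = x
  brace_one : ∀ x l, (1 : A.X) ∈ l → brace x l = 0
  brace_addl : ∀ x x' l, brace (x + x') l = brace x l + brace x' l
  brace_smull : ∀ (r : R) x l, brace (r • x) l = r • brace x l
  brace_adda : ∀ x p (a b : A.X) s,
    brace x (p ++ (a + b) :: s) = brace x (p ++ a :: s) + brace x (p ++ b :: s)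
  brace_smula : ∀ x p (r : R) (a : A.X) s, brace x (p ++ (r • a) :: s) = r • brace x (p ++ a :: s)
  brace_mem : ∀ {i : ℤ} {x : A.X}, x ∈ A.grading i → ∀ w : List (A.X × ℤ), HomogW A w →
    brace x (w.map Prod.fst) ∈ A.grading (i + wdeg w + w.length)
  brace_diff : ∀ {i : ℤ} {x : A.X}, x ∈ A.grading i → ∀ (p0 : A.X × ℤ) (t : List (A.X × ℤ)),
    HomogW A (p0 :: t) →
    A.d (brace x (p0.1 :: t.map Prod.fst)) =
      ksgn ((t.length : ℤ) + 1) •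
          (brace x (p0.1 :: t.map Prod.fst).dropLast *
            (p0.1 :: t.map Prod.fst).getLast (List.cons_ne_nil _ _)) +
        ksgn (i * p0.2 + (t.length : ℤ) * p0.2) • (p0.1 * brace x (t.map Prod.fst)) +
        altSum 1 ((adjMerges (p0.1 :: t.map Prod.fst)).map (fun m => brace x m)) +
        ksgn ((t.length : ℤ) + 1) • brace (A.d x) (p0.1 :: t.map Prod.fst) +
        ((dSlotTerms (fun y => A.d y) ((t.length : ℤ) + 1 + i) (p0 :: t)).map
            (fun q => ksgn q.1 • brace x q.2)).sum
  brace_mul : ∀ {i j : ℤ} {x y : A.X}, x ∈ A.grading i → y ∈ A.grading j →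
    ∀ w : List (A.X × ℤ), HomogW A w →
    brace (x * y) (w.map Prod.fst) =
      ((splits2 w).map (fun q =>
        ksgn (wdeg q.1 * j + (q.2.length : ℤ) * (i + wdeg q.1)) •
          (brace x (q.1.map Prod.fst) * brace y (q.2.map Prod.fst)))).sum
  brace_assoc : ∀ {i : ℤ} {x : A.X}, x ∈ A.grading i → ∀ xs ys : List (A.X × ℤ),
    HomogW A xs → HomogW A ys →
    brace (brace x (xs.map Prod.fst)) (ys.map Prod.fst) =
      ((ileave brace xs ys 0).map (fun q => ksgn q.1 • brace x q.2)).sum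

/-- An `S₂`-algebra over `R`: an augmented dg algebra together with brace operations. -/
structure S2Algebra (R : Type) [CommRing R] where
  alg : DGAlgebra R
  br : BraceStr alg

/-- A dg bialgebra (what the paper calls a dg Hopf algebra): an augmented dg algebra which
is simultaneously a coaugmented dg coalgebra (counit = augmentation, coaugmentation = unit)
such that the comultiplication is a map of algebras. -/
structure DGBialgebra (R : Type) [CommRing R] where
  alg : DGAlgebra R
  comul : alg.X →ₗ[R] alg.X ⊗[R] alg.X
  coassoc : (TensorProduct.assoc R alg.X alg.X alg.X).toLinearMap.comp
        ((TensorProduct.map comul LinearMap.id).comp comul)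
      = (TensorProduct.map LinearMap.id comul).comp comul
  counit_left : ∀ x : alg.X,
    TensorProduct.lid R alg.X (TensorProduct.map alg.aug.toLinearMap LinearMap.id (comul x)) = x
  counit_right : ∀ x : alg.X,
    TensorProduct.rid R alg.X (TensorProduct.map LinearMap.id alg.aug.toLinearMap (comul x)) = x
  comul_one : comul 1 = 1 ⊗ₜ 1
  comul_mul : ∀ x y : alg.X, comul (x * y) = comul x * comul y
  comul_grading : ∀ {n : ℤ} {x : alg.X}, x ∈ alg.grading n →
    comul x ∈ ⨆ p : {p : ℤ × ℤ // p.1 + p.2 = n},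
      LinearMap.range (TensorProduct.map (alg.grading p.1.1).subtype (alg.grading p.1.2).subtype)
  sop : alg.X →ₗ[R] alg.X
  sop_spec : ∀ {i : ℤ} {x : alg.X}, x ∈ alg.grading i → sop x = ksgn i • x
  comul_d : comul.comp alg.d
      = (TensorProduct.map alg.d LinearMap.id + TensorProduct.map sop alg.d).comp comul

/-- The reduced comultiplication `Δ̄ : C → C ⊗ C`. -/
def DGBialgebra.redComul {R : Type} [CommRing R] (H : DGBialgebra R) :
    H.alg.X →ₗ[R] H.alg.X ⊗[R] H.alg.X :=
  H.comul - (TensorProduct.mk R H.alg.X H.alg.X).flip 1 - TensorProduct.mk R H.alg.X H.alg.X 1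
    + LinearMap.smulRight H.alg.aug.toLinearMap ((1 : H.alg.X) ⊗ₜ (1 : H.alg.X))

/-- `H.IsRedExp k c L` expresses that the list `L` of homogeneous words of length `k + 1`
is an expansion (in sumless Sweedler style) of the iterated reduced diagonal
`Δ̄⁽ᵏ⁺¹⁾(c) = c̄⁽¹⁾ ⊗ ⋯ ⊗ c̄⁽ᵏ⁺¹⁾`. -/
def DGBialgebra.IsRedExp {R : Type} [CommRing R] (H : DGBialgebra R) :
    ℕ → H.alg.X → List (List (H.alg.X × ℤ)) → Prop
  | 0, c, L =>
      (∀ w ∈ L, ∃ p : H.alg.X × ℤ, w = [p] ∧ p.1 ∈ H.alg.grading p.2 ∧ H.alg.aug p.1 = 0) ∧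
        c = (L.map (fun w => (w.map Prod.fst).sum)).sum
  | k + 1, c, L => ∃ (n : ℕ) (a : Fin n → H.alg.X × ℤ) (b : Fin n → H.alg.X)
      (Ls : Fin n → List (List (H.alg.X × ℤ))),
      (∀ s, (a s).1 ∈ H.alg.grading (a s).2 ∧ H.alg.aug (a s).1 = 0) ∧
      H.redComul c = ∑ s, (a s).1 ⊗ₜ[R] b s ∧
      (∀ s, DGBialgebra.IsRedExp H k (b s) (Ls s)) ∧
      L = lflat (List.ofFn (fun s => (Ls s).map (fun w => a s :: w)))

/-- `H.IsDiagExp k c L` : `L` is an expansion of the iterated (unreduced) diagonal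
`Δ⁽ᵏ⁺¹⁾(c)` into homogeneous words of length `k + 1`. -/
def DGBialgebra.IsDiagExp {R : Type} [CommRing R] (H : DGBialgebra R) :
    ℕ → H.alg.X → List (List (H.alg.X × ℤ)) → Prop
  | 0, c, L =>
      (∀ w ∈ L, ∃ p : H.alg.X × ℤ, w = [p] ∧ p.1 ∈ H.alg.grading p.2) ∧
        c = (L.map (fun w => (w.map Prod.fst).sum)).sum
  | k + 1, c, L => ∃ (n : ℕ) (a : Fin n → H.alg.X × ℤ) (b : Fin n → H.alg.X)
      (Ls : Fin n → List (List (H.alg.X × ℤ))),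
      (∀ s, (a s).1 ∈ H.alg.grading (a s).2) ∧
      H.comul c = ∑ s, (a s).1 ⊗ₜ[R] b s ∧
      (∀ s, DGBialgebra.IsDiagExp H k (b s) (Ls s)) ∧
      L = lflat (List.ofFn (fun s => (Ls s).map (fun w => a s :: w)))

/-- Conilpotency: for every element the iterated reduced diagonals eventually vanish. -/
def DGBialgebra.Conil {R : Type} [CommRing R] (H : DGBialgebra R) : Prop :=
  ∀ c : H.alg.X, H.alg.aug c = 0 → ∃ N : ℕ, ∀ k ≥ N, H.IsRedExp k c []

/-- A twisting morphism from a dg bialgebra to an augmented dg algebra: a degree `-1`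
linear map `f` with `d ∘ f + f ∘ d = m ∘ (f ⊗ f) ∘ Δ̄`. -/
def IsTwisting {R : Type} [CommRing R] (H : DGBialgebra R) (A : DGAlgebra R)
    (f : H.alg.X →ₗ[R] A.X) : Prop :=
  (∀ {i : ℤ} {x : H.alg.X}, x ∈ H.alg.grading i → f x ∈ A.grading (i - 1)) ∧
    f 1 = 0 ∧
    A.d.comp f + f.comp H.alg.d
      = (LinearMap.mul' R A.X).comp ((TensorProduct.map f f).comp H.redComul)

/-- The signed sum `Σ (-1)^α f(c₁){f(c̄₂⁽¹⁾), …, f(c̄₂⁽ᵏ⁾)}` over a family `L` of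
Sweedler words, where `α = k(|c₁|-1) + Σ (k-i)(|c̄₂⁽ⁱ⁾|-1)`. -/
def braceSum {R : Type} [CommRing R] (H : DGBialgebra R) (A : S2Algebra R)
    (f : H.alg.X →ₗ[R] A.alg.X) (x1 : A.alg.X) (d1 : ℤ) (L : List (List (H.alg.X × ℤ))) :
    A.alg.X :=
  (L.map (fun w =>
    ksgn (hopfAlpha d1 (w.map Prod.snd)) • A.br.brace x1 (w.map (fun p => f p.1)))).sum

/-- The Hopf twisting morphism identity for the single pair `(u, v)`:
`f(uv) = Σ (-1)^α f(u){f(v̄⁽¹⁾), …, f(v̄⁽ᵏ⁾)}`. -/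
def HopfPair {R : Type} [CommRing R] (H : DGBialgebra R) (A : S2Algebra R)
    (f : H.alg.X →ₗ[R] A.alg.X) (u v : H.alg.X) : Prop :=
  ∀ (d1 : ℤ), u ∈ H.alg.grading d1 → H.alg.aug u = 0 → H.alg.aug v = 0 →
    ∀ (N : ℕ) (Ls : ℕ → List (List (H.alg.X × ℤ))),
      (∀ k, H.IsRedExp k v (Ls k)) → (∀ k, N ≤ k → Ls k = []) →
      f (u * v) = ((List.range N).map (fun k => braceSum H A f (f u) d1 (Ls k))).sum

/-- A twisting morphism into an `S₂`-algebra is Hopf if the Hopf identity holds for all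
pairs of augmentation-ideal elements. -/
def IsHopfTw {R : Type} [CommRing R] (H : DGBialgebra R) (A : S2Algebra R)
    (f : H.alg.X →ₗ[R] A.alg.X) : Prop :=
  ∀ u v : H.alg.X, HopfPair H A f u v

/-- A chain map inducing an isomorphism on homology (a weak equivalence). -/
def QIso {R : Type} [CommRing R] {X Y : Type} [AddCommGroup X] [Module R X]
    [AddCommGroup Y] [Module R Y] (dX : X →ₗ[R] X) (dY : Y →ₗ[R] Y) (f : X →ₗ[R] Y) : Prop :=
  (∀ x, f (dX x) = dY (f x)) ∧
    (∀ y, dY y = 0 → ∃ x z, dX x = 0 ∧ y = f x + dY z) ∧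
    (∀ x, dX x = 0 → (∃ z, f x = dY z) → ∃ w, x = dX w)

/-- Morphisms of augmented dg algebras. -/
structure DGAlgHom {R : Type} [CommRing R] (A B : DGAlgebra R) where
  f : A.X →ₐ[R] B.X
  map_grading : ∀ {i : ℤ} {x : A.X}, x ∈ A.grading i → f x ∈ B.grading i
  map_d : ∀ x, f (A.d x) = B.d (f x)
  map_aug : ∀ x, B.aug (f x) = A.aug x

/-- Morphisms of `S₂`-algebras. -/
structure S2AlgHom {R : Type} [CommRing R] (A B : S2Algebra R) where
  f : A.alg.X →ₐ[R] B.alg.X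
  map_grading : ∀ {i : ℤ} {x : A.alg.X}, x ∈ A.alg.grading i → f x ∈ B.alg.grading i
  map_d : ∀ x, f (A.alg.d x) = B.alg.d (f x)
  map_aug : ∀ x, B.alg.aug (f x) = A.alg.aug x
  map_brace : ∀ x l, f (A.br.brace x l) = B.br.brace (f x) (l.map (fun y => f y))

/-- Morphisms of dg bialgebras. -/
structure DGBialgHom {R : Type} [CommRing R] (H K : DGBialgebra R) where
  f : H.alg.X →ₐ[R] K.alg.X
  map_grading : ∀ {i : ℤ} {x : H.alg.X}, x ∈ H.alg.grading i → f x ∈ K.alg.grading i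
  map_d : ∀ x, f (H.alg.d x) = K.alg.d (f x)
  map_aug : ∀ x, K.alg.aug (f x) = H.alg.aug x
  map_comul : ∀ x, K.comul (f x) = TensorProduct.map f.toLinearMap f.toLinearMap (H.comul x)

/-- Zig-zags of weak equivalences of `S₂`-algebras. -/
inductive S2ZigZag {R : Type} [CommRing R] : S2Algebra R → S2Algebra R → Prop
  | refl (A : S2Algebra R) : S2ZigZag A A
  | fwd {A B C : S2Algebra R} (f : S2AlgHom A B)
      (hf : QIso A.alg.d B.alg.d f.f.toLinearMap) (h : S2ZigZag B C) : S2ZigZag A C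
  | bwd {A B C : S2Algebra R} (f : S2AlgHom B A)
      (hf : QIso B.alg.d A.alg.d f.f.toLinearMap) (h : S2ZigZag B C) : S2ZigZag A C

/-- Zig-zags of weak equivalences of dg bialgebras. -/
inductive BialgZigZag {R : Type} [CommRing R] : DGBialgebra R → DGBialgebra R → Prop
  | refl (H : DGBialgebra R) : BialgZigZag H H
  | fwd {A B C : DGBialgebra R} (f : DGBialgHom A B)
      (hf : QIso A.alg.d B.alg.d f.f.toLinearMap) (h : BialgZigZag B C) : BialgZigZag A C
  | bwd {A B C : DGBialgebra R} (f : DGBialgHom B A)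
      (hf : QIso B.alg.d A.alg.d f.f.toLinearMap) (h : BialgZigZag B C) : BialgZigZag A C
/-- A realization of the bar construction `BA` of an `S₂`-algebra `A`, as the
Gerstenhaber–Voronov dg Hopf algebra: the underlying coalgebra is the tensor coalgebra
`T(ΣĀ)` (words `wd [a₁|⋯|a_k]`, deconcatenation comultiplication, bar differential), with
the left non-decreasing multiplication determined by the braces. -/
structure BarS2 {R : Type} [CommRing R] (A : S2Algebra R) where
  H : DGBialgebra R
  wd : List (A.alg.X × ℤ) → H.alg.X
  wd_nil : wd [] = 1
  wd_add : ∀ p (a b : A.alg.X) (i : ℤ) s,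
    wd (p ++ (a + b, i) :: s) = wd (p ++ (a, i) :: s) + wd (p ++ (b, i) :: s)
  wd_smul : ∀ p (r : R) (a : A.alg.X) (i : ℤ) s,
    wd (p ++ (r • a, i) :: s) = r • wd (p ++ (a, i) :: s)
  wd_mem : ∀ w, BarW A.alg w → wd w ∈ H.alg.grading (wdegS w)
  wd_aug : ∀ w, BarW A.alg w → w ≠ [] → H.alg.aug (wd w) = 0
  wd_d : ∀ w, BarW A.alg w →
    H.alg.d (wd w) =
      -(((barD1 (fun a => A.alg.d a) 0 w).map (fun q => ksgn q.1 • wd q.2)).sum) +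
        ((barD2 0 w).map (fun q => ksgn q.1 • wd q.2)).sum
  wd_comul : ∀ w, BarW A.alg w →
    H.comul (wd w) = ((splits2 w).map (fun q => wd q.1 ⊗ₜ[R] wd q.2)).sum
  span : ∀ x : H.alg.X, x ∈ Submodule.span R {y | ∃ w, BarW A.alg w ∧ y = wd w}
  free : ∀ (M : Type) [AddCommGroup M] [Module R M] (g : List (A.alg.X × ℤ) → M),
    (∀ p (a b : A.alg.X) (i : ℤ) s,
        g (p ++ (a + b, i) :: s) = g (p ++ (a, i) :: s) + g (p ++ (b, i) :: s)) →
    (∀ p (r : R) (a : A.alg.X) (i : ℤ) s, g (p ++ (r • a, i) :: s) = r • g (p ++ (a, i) :: s)) →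
    ∃! φ : H.alg.X →ₗ[R] M, ∀ w, BarW A.alg w → φ (wd w) = g w
  pr : H.alg.X →ₗ[R] A.alg.X
  pr_single : ∀ (a : A.alg.X) (i : ℤ), a ∈ A.alg.grading i → A.alg.aug a = 0 →
    pr (wd [(a, i)]) = a
  pr_nil : pr (wd []) = 0
  pr_long : ∀ w, BarW A.alg w → 2 ≤ w.length → pr (wd w) = 0
  nondecr : ∀ (m : ℕ) w, BarW A.alg w → m ≤ w.length → ∀ y : H.alg.X,
    wd w * y ∈ Submodule.span R {z | ∃ w', BarW A.alg w' ∧ m ≤ w'.length ∧ z = wd w'}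
  mul_single : ∀ {i : ℤ} {x : A.alg.X}, x ∈ A.alg.grading i → A.alg.aug x = 0 →
    ∀ w, BarW A.alg w → pr (wd [(x, i)] * wd w) = A.br.brace x (w.map Prod.fst)

/-- A realization of the cobar construction `ΩC` of a dg bialgebra `C`, with Kadeishvili's
`S₂`-algebra structure: the underlying algebra is the tensor algebra `T(Σ⁻¹C̄)` with the
cobar differential, the first brace is
`[x]{[y₁|⋯|y_q]} = (-1)^α [x⁽¹⁾y₁|⋯|x⁽ᑫ⁾y_q]`, and the higher braces vanish on single
brackets. -/
structure CobarOf {R : Type} [CommRing R] (H : DGBialgebra R) where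
  A : S2Algebra R
  wd : List (H.alg.X × ℤ) → A.alg.X
  wd_nil : wd [] = 1
  wd_append : ∀ w w', wd (w ++ w') = wd w * wd w'
  wd_add : ∀ (a b : H.alg.X) (i : ℤ), wd [(a + b, i)] = wd [(a, i)] + wd [(b, i)]
  wd_smul : ∀ (r : R) (a : H.alg.X) (i : ℤ), wd [(r • a, i)] = r • wd [(a, i)]
  wd_mem : ∀ w, BarW H.alg w → wd w ∈ A.alg.grading (wdegC w)
  wd_aug : ∀ (c : H.alg.X) (i : ℤ), c ∈ H.alg.grading i → H.alg.aug c = 0 →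
    A.alg.aug (wd [(c, i)]) = 0
  d_single : ∀ (c : H.alg.X) (i : ℤ), c ∈ H.alg.grading i → H.alg.aug c = 0 →
    ∀ (n : ℕ) (a b : Fin n → H.alg.X × ℤ),
      (∀ s, (a s).1 ∈ H.alg.grading (a s).2 ∧ H.alg.aug (a s).1 = 0) →
      (∀ s, (b s).1 ∈ H.alg.grading (b s).2 ∧ H.alg.aug (b s).1 = 0) →
      H.redComul c = ∑ s, (a s).1 ⊗ₜ[R] (b s).1 →
      A.alg.d (wd [(c, i)]) =
        -(wd [(H.alg.d c, i - 1)]) + ∑ s, ksgn ((a s).2) • wd [a s, b s]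
  brace_single : ∀ (x : H.alg.X) (dx : ℤ), x ∈ H.alg.grading dx → H.alg.aug x = 0 →
    ∀ (w : List (H.alg.X × ℤ)), BarW H.alg w → w ≠ [] →
    ∀ L, H.IsDiagExp (w.length - 1) x L →
    A.br.brace (wd [(x, dx)]) [wd w] =
      (L.map (fun t =>
        ksgn (cobarAlpha dx (t.map Prod.snd) (w.map Prod.snd)) •
          wd (List.zipWith (fun p q => (p.1 * q.1, p.2 + q.2)) t w))).sum
  brace_higher : ∀ (c : H.alg.X) (i : ℤ), c ∈ H.alg.grading i → H.alg.aug c = 0 →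
    ∀ l : List A.alg.X, 2 ≤ l.length → A.br.brace (wd [(c, i)]) l = 0
  span : ∀ x : A.alg.X, x ∈ Submodule.span R {y | ∃ w, BarW H.alg w ∧ y = wd w}
  free : ∀ (B : Type) [Ring B] [Algebra R B] (g : H.alg.X × ℤ → B),
    (∀ a b i, g (a + b, i) = g (a, i) + g (b, i)) →
    (∀ (r : R) a i, g (r • a, i) = r • g (a, i)) →
    ∃! φ : A.alg.X →ₐ[R] B,
      ∀ (c : H.alg.X) (i : ℤ), c ∈ H.alg.grading i → H.alg.aug c = 0 → φ (wd [(c, i)]) = g (c, i)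

/-- A realization of the free `S₂`-algebra `𝕊₂(Σ⁻¹C̄)` on the desuspended coaugmentation
coideal of a dg bialgebra `C`, together with the extra differential `∂_Δ` (`delta`)
determined by `∂_Δ [c] = (-1)^{|c̄⁽¹⁾|}[c̄⁽¹⁾|c̄⁽²⁾]`, extended as a derivation. -/
structure FreeS2On {R : Type} [CommRing R] (H : DGBialgebra R) where
  F : S2Algebra R
  gen : H.alg.X × ℤ → F.alg.X
  gen_add : ∀ (a b : H.alg.X) (i : ℤ), gen (a + b, i) = gen (a, i) + gen (b, i)
  gen_smul : ∀ (r : R) (a : H.alg.X) (i : ℤ), gen (r • a, i) = r • gen (a, i)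
  gen_mem : ∀ {i : ℤ} {c : H.alg.X}, c ∈ H.alg.grading i → H.alg.aug c = 0 →
    gen (c, i) ∈ F.alg.grading (i - 1)
  gen_d : ∀ (c : H.alg.X) (i : ℤ), c ∈ H.alg.grading i → H.alg.aug c = 0 →
    F.alg.d (gen (c, i)) = -gen (H.alg.d c, i - 1)
  free : ∀ (B : S2Algebra R) (g : H.alg.X × ℤ → B.alg.X),
    (∀ a b i, g (a + b, i) = g (a, i) + g (b, i)) →
    (∀ (r : R) a i, g (r • a, i) = r • g (a, i)) →
    (∀ {i : ℤ} {c : H.alg.X}, c ∈ H.alg.grading i → H.alg.aug c = 0 →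
      g (c, i) ∈ B.alg.grading (i - 1)) →
    ∃! φ : F.alg.X →ₐ[R] B.alg.X,
      (∀ {i : ℤ} {x : F.alg.X}, x ∈ F.alg.grading i → φ x ∈ B.alg.grading i) ∧
      (∀ x l, φ (F.br.brace x l) = B.br.brace (φ x) (l.map (fun y => φ y))) ∧
      (∀ (c : H.alg.X) (i : ℤ), c ∈ H.alg.grading i → H.alg.aug c = 0 → φ (gen (c, i)) = g (c, i))
  delta : F.alg.X →ₗ[R] F.alg.X
  delta_gen : ∀ (c : H.alg.X) (i : ℤ), c ∈ H.alg.grading i → H.alg.aug c = 0 →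
    ∀ (n : ℕ) (a b : Fin n → H.alg.X × ℤ),
      (∀ s, (a s).1 ∈ H.alg.grading (a s).2 ∧ H.alg.aug (a s).1 = 0) →
      (∀ s, (b s).1 ∈ H.alg.grading (b s).2 ∧ H.alg.aug (b s).1 = 0) →
      H.redComul c = ∑ s, (a s).1 ⊗ₜ[R] (b s).1 →
      delta (gen (c, i)) = ∑ s, ksgn ((a s).2) • (gen (a s) * gen (b s))
  delta_mem : ∀ {i : ℤ} {x : F.alg.X}, x ∈ F.alg.grading i → delta x ∈ F.alg.grading (i - 1)
  delta_mul : ∀ {i : ℤ} {x : F.alg.X}, x ∈ F.alg.grading i → ∀ y,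
    delta (x * y) = delta x * y + ksgn i • (x * delta y)
  delta_brace : ∀ {i : ℤ} {x : F.alg.X}, x ∈ F.alg.grading i →
    ∀ w : List (F.alg.X × ℤ), HomogW F.alg w →
    delta (F.br.brace x (w.map Prod.fst)) =
      ksgn (w.length : ℤ) • F.br.brace (delta x) (w.map Prod.fst) +
        ((dSlotTerms (fun y => delta y) ((w.length : ℤ) + i) w).map
          (fun q => ksgn q.1 • F.br.brace x q.2)).sum
  delta_sq : ∀ x, delta (delta x) = 0
  delta_d : ∀ x, F.alg.d (delta x) + delta (F.alg.d x) = 0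

/-- A submodule of an `S₂`-algebra is an operadic ideal when it is closed under all the
operations whenever one entry lies in it. -/
def S2Closed {R : Type} [CommRing R] (A : S2Algebra R) (p : Submodule R A.alg.X) : Prop :=
  (∀ x y : A.alg.X, x ∈ p → x * y ∈ p) ∧ (∀ x y : A.alg.X, y ∈ p → x * y ∈ p) ∧
    (∀ (x : A.alg.X) l, x ∈ p → A.br.brace x l ∈ p) ∧
    (∀ (x : A.alg.X) l₁ (y : A.alg.X) l₂, y ∈ p → A.br.brace x (l₁ ++ y :: l₂) ∈ p)

/-- The operadic (`S₂`-)ideal generated by a set. -/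
def S2Span {R : Type} [CommRing R] (A : S2Algebra R) (S : Set A.alg.X) : Submodule R A.alg.X :=
  sInf {p : Submodule R A.alg.X | S ⊆ p ∧ S2Closed A p}

/-- The generators `[c₁c₂] - Σ (-1)^α [c₁]{[c̄₂⁽¹⁾], …, [c̄₂⁽ᵏ⁾]}` of the ideal defining
the `S₂` cobar construction. -/
def relSet {R : Type} [CommRing R] (H : DGBialgebra R) (Fr : FreeS2On H) : Set Fr.F.alg.X :=
  {z | ∃ (c₁ c₂ : H.alg.X) (d₁ d₂ : ℤ), c₁ ∈ H.alg.grading d₁ ∧ H.alg.aug c₁ = 0 ∧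
    c₂ ∈ H.alg.grading d₂ ∧ H.alg.aug c₂ = 0 ∧
    ∃ (N : ℕ) (Ls : ℕ → List (List (H.alg.X × ℤ))),
      (∀ k, H.IsRedExp k c₂ (Ls k)) ∧ (∀ k, N ≤ k → Ls k = []) ∧
      z = Fr.gen (c₁ * c₂, d₁ + d₂) -
        ((List.range N).map (fun k =>
          ((Ls k).map (fun w =>
            ksgn (hopfAlpha d₁ (w.map Prod.snd)) •
              Fr.F.br.brace (Fr.gen (c₁, d₁)) (w.map (fun p => Fr.gen p)))).sum)).sum}

/-- A realization of the `S₂` cobar construction `Ω̃C = 𝕊₂(Σ⁻¹C̄)/I`, as a quotient of the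
free `S₂`-algebra on `Σ⁻¹C̄` (with total differential `∂ = d + ∂_Δ`) by the ideal `I`
generated by `relSet`. -/
structure TCobar {R : Type} [CommRing R] (H : DGBialgebra R) where
  Fr : FreeS2On H
  T : S2Algebra R
  q : Fr.F.alg.X →ₐ[R] T.alg.X
  q_grading : ∀ {i : ℤ} {x : Fr.F.alg.X}, x ∈ Fr.F.alg.grading i → q x ∈ T.alg.grading i
  q_brace : ∀ x l, q (Fr.F.br.brace x l) = T.br.brace (q x) (l.map (fun y => q y))
  q_d : ∀ x, T.alg.d (q x) = q (Fr.F.alg.d x + Fr.delta x)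
  q_surj : Function.Surjective q
  ker_q : ∀ x, q x = 0 ↔ x ∈ S2Span Fr.F (relSet H Fr)

/-- The tensor Hopf algebra `TV` on a free graded `R`-module `V` (with basis `ι` in the
given degrees, zero differential), the elements of `V` being primitive. -/
structure TensorBialg {R : Type} [CommRing R] (ι : Type) (degV : ι → ℤ) where
  H : DGBialgebra R
  v : ι → H.alg.X
  v_mem : ∀ i, v i ∈ H.alg.grading (degV i)
  v_aug : ∀ i, H.alg.aug (v i) = 0
  v_prim : ∀ i, H.redComul (v i) = 0
  d_zero : H.alg.d = 0
  falg : ∀ (B : Type) [Ring B] [Algebra R B] (g : ι → B),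
    ∃! φ : H.alg.X →ₐ[R] B, ∀ i, φ (v i) = g i
  lin_indep : LinearIndependent R v
  conil : H.Conil
/-- Specification of the simplicial cochain `S₂`-algebra `S^*(S¹, ℤ)` of
`S¹ = Δ[1]/∂Δ[1]` (Berger–Fresse): zero differential, free over `ℤ` on the unit in
degree `0` and the dual `x` of the nondegenerate `1`-simplex in cohomological degree `1`,
`x·x = 0`, the only nonzero brace on `x` being `x{x} = -x`. -/
def IsS1Cochains (A : S2Algebra ℤ) (x : A.alg.X) : Prop :=
  A.alg.d = 0 ∧
    x ∈ A.alg.grading (-1) ∧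
    (∀ y : A.alg.X, y ∈ A.alg.grading 0 ↔ ∃ n : ℤ, y = n • (1 : A.alg.X)) ∧
    (∀ y : A.alg.X, y ∈ A.alg.grading (-1) ↔ ∃ n : ℤ, y = n • x) ∧
    (∀ i : ℤ, i ≠ 0 → i ≠ -1 → A.alg.grading i = ⊥) ∧
    (∀ n : ℤ, n • x = 0 → n = 0) ∧
    (∀ n : ℤ, n • (1 : A.alg.X) = 0 → n = 0) ∧
    x * x = 0 ∧
    A.br.brace x [x] = -x ∧
    (∀ l : List A.alg.X, 2 ≤ l.length → A.br.brace x l = 0)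

/-- A commutative dg algebra regarded as an `S₂`-algebra with trivial braces. -/
def IsCommTrivialBraces {R : Type} [CommRing R] (B : S2Algebra R) : Prop :=
  (∀ a b : B.alg.X, a * b = b * a) ∧
    ∀ (y : B.alg.X) (l : List B.alg.X), l ≠ [] → B.br.brace y l = 0

/-- The mod `2` reduction of the cochains of the circle, as an `S₂`-algebra over `ℤ/2`. -/
def IsS1CochainsMod2 (A : S2Algebra (ZMod 2)) (x : A.alg.X) : Prop :=
  A.alg.d = 0 ∧
    x ∈ A.alg.grading (-1) ∧
    (∀ y : A.alg.X, y ∈ A.alg.grading (-1) ↔ ∃ n : ZMod 2, y = n • x) ∧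
    x ≠ 0 ∧ x * x = 0 ∧ A.br.brace x [x] = -x

/-! ### Auxiliary development for the proof -/

namespace KM

lemma ksgn_even {n : ℤ} (h : Even n) : ksgn n = 1 := by
  simp [ksgn, Int.negOnePow_even n h]

lemma ksgn_odd {n : ℤ} (h : Odd n) : ksgn n = -1 := by
  simp [ksgn, Int.negOnePow_odd n h]

lemma ksgn_zero : ksgn 0 = 1 := ksgn_even (by decide)
lemma ksgn_one : ksgn 1 = -1 := ksgn_odd (by decide)

/-- Projection onto the degree `i` graded piece. -/
def pr (C : DGAlgebra ℤ) (i : ℤ) : C.X →+ C.X :=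
  letI := C.isInternal.chooseDecomposition
  { toFun := fun x => (DirectSum.decompose C.grading x i : C.X)
    map_zero' := by simp
    map_add' := fun x y => by
      show (((DirectSum.decompose C.grading) (x + y) i : C.X)) = _
      rw [DirectSum.decompose_add, DirectSum.add_apply, Submodule.coe_add] }

lemma pr_mem (C : DGAlgebra ℤ) (i : ℤ) (x : C.X) : pr C i x ∈ C.grading i := by
  letI := C.isInternal.chooseDecomposition
  exact (DirectSum.decompose C.grading x i).2

lemma pr_same (C : DGAlgebra ℤ) {i : ℤ} {x : C.X} (hx : x ∈ C.grading i) :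
    pr C i x = x := by
  letI := C.isInternal.chooseDecomposition
  exact DirectSum.decompose_of_mem_same _ hx

lemma pr_ne (C : DGAlgebra ℤ) {i j : ℤ} {x : C.X} (hx : x ∈ C.grading j) (h : j ≠ i) :
    pr C i x = 0 := by
  letI := C.isInternal.chooseDecomposition
  exact DirectSum.decompose_of_mem_ne _ hx h

lemma homog_ind (C : DGAlgebra ℤ) (p : C.X → Prop) (h0 : p 0)
    (hh : ∀ (i : ℤ) (x : C.X), x ∈ C.grading i → p x)
    (hadd : ∀ x y, p x → p y → p (x + y)) : ∀ x, p x := by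
  letI := C.isInternal.chooseDecomposition
  exact DirectSum.Decomposition.inductionOn C.grading h0 (fun {i} m => hh i m m.2) hadd

lemma pr_d (C : DGAlgebra ℤ) (i : ℤ) (x : C.X) :
    pr C (i - 1) (C.d x) = C.d (pr C i x) := by
  induction x using homog_ind C with
  | h0 => simp
  | hh j y hy =>
    by_cases h : j = i
    · subst h
      rw [pr_same C hy, pr_same C (C.d_mem hy)]
    · rw [pr_ne C hy h, pr_ne C (C.d_mem hy) (by omega), map_zero]
  | hadd a b ha hb => rw [map_add, map_add, map_add, map_add, ha, hb]

lemma pr_map {C D : DGAlgebra ℤ} (f : C.X →+ D.X)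
    (hf : ∀ (i : ℤ) (x : C.X), x ∈ C.grading i → f x ∈ D.grading i) (i : ℤ) (x : C.X) :
    pr D i (f x) = f (pr C i x) := by
  induction x using homog_ind C with
  | h0 => simp
  | hh j y hy =>
    by_cases h : j = i
    · subst h
      rw [pr_same C hy, pr_same D (hf _ _ hy)]
    · rw [pr_ne C hy h, pr_ne D (hf _ _ hy) h, map_zero]
  | hadd a b ha hb => rw [map_add, map_add, map_add, map_add, ha, hb]

section BraceLin

variable (C : S2Algebra ℤ)

lemma asmul (n : ℤ) (x : C.alg.X) :
    @HSMul.hSMul ℤ C.alg.X C.alg.X (@instHSMul ℤ C.alg.X Algebra.toSMul) n x = n • x := by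
  have h := @Int.cast_smul_eq_zsmul ℤ C.alg.X _ _
    (@Algebra.toModule ℤ C.alg.X _ _ C.alg.algX) n x
  simpa using h

lemma br1_add (x a b : C.alg.X) :
    C.br.brace x [a + b] = C.br.brace x [a] + C.br.brace x [b] := by
  simpa using C.br.brace_adda x [] a b []

lemma br1_smul (x : C.alg.X) (n : ℤ) (a : C.alg.X) :
    C.br.brace x [n • a] = n • C.br.brace x [a] := by
  have h := C.br.brace_smula x [] n a []
  simp only [List.nil_append] at h
  rw [asmul C n a, asmul C n (C.br.brace x [a])] at h
  exact h

lemma br1_zero (x : C.alg.X) : C.br.brace x [0] = 0 := by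
  have := br1_smul C x 0 0
  simpa using this

lemma br1_neg (x a : C.alg.X) : C.br.brace x [-a] = -C.br.brace x [a] := by
  have := br1_smul C x (-1) a
  simpa using this

lemma br1_sub (x a b : C.alg.X) :
    C.br.brace x [a - b] = C.br.brace x [a] - C.br.brace x [b] := by
  rw [sub_eq_add_neg, br1_add, br1_neg, sub_eq_add_neg]

lemma brl_smul (n : ℤ) (x : C.alg.X) (l : List C.alg.X) :
    C.br.brace (n • x) l = n • C.br.brace x l := by
  have h := C.br.brace_smull n x l
  rw [asmul C n x, asmul C n (C.br.brace x l)] at h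
  exact h

lemma brl_zero (l : List C.alg.X) : C.br.brace 0 l = 0 := by
  have := brl_smul C 0 0 l
  simpa using this

lemma brl_neg (x : C.alg.X) (l : List C.alg.X) :
    C.br.brace (-x) l = -C.br.brace x l := by
  have := brl_smul C (-1) x l
  simpa using this

lemma brl_sub (x y : C.alg.X) (l : List C.alg.X) :
    C.br.brace (x - y) l = C.br.brace x l - C.br.brace y l := by
  rw [sub_eq_add_neg, C.br.brace_addl, brl_neg, sub_eq_add_neg]

end BraceLin

lemma adjMerges_singleton {α : Type} [Mul α] (a : α) : adjMerges [a] = [] := rfl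

lemma altSum_nil {M : Type} [AddCommGroup M] (e : ℤ) : altSum e ([] : List M) = 0 := rfl

lemma dSlotTerms_single {α : Type} (dd : α → α) (e : ℤ) (y : α) (b : ℤ) :
    dSlotTerms dd e [(y, b)] = [(e, [dd y])] := rfl

/-- The differential of a single brace. -/
lemma dBrace1 (C : S2Algebra ℤ) {i j : ℤ} {x y : C.alg.X}
    (hx : x ∈ C.alg.grading i) (hy : y ∈ C.alg.grading j) :
    C.alg.d (C.br.brace x [y]) =
      -(x * y) + ksgn (i * j) • (y * x) - C.br.brace (C.alg.d x) [y]
        + ksgn (1 + i) • C.br.brace x [C.alg.d y] := by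
  have h := C.br.brace_diff hx (y, j) []
    (by rintro p hp; simp only [List.mem_singleton] at hp; subst hp; exact hy)
  simp only [List.map_nil, List.dropLast_singleton, List.getLast_singleton,
    List.length_nil, Nat.cast_zero, zero_add, zero_mul, add_zero,
    adjMerges_singleton, altSum_nil, dSlotTerms_single, List.map_cons,
    List.sum_cons, List.sum_nil, C.br.brace_nil, ksgn_one, neg_smul, one_smul] at h
  rw [h]
  module

lemma ksgn_two : ksgn 2 = 1 := ksgn_even (by decide)
lemma ksgn_neg_one : ksgn (-1) = -1 := ksgn_odd (by decide)

/-- Cone (of multiplication by 2) cycles. -/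
def CCyc (C : S2Algebra ℤ) (z u : C.alg.X) : Prop :=
  C.alg.d z + (2:ℤ) • u = 0 ∧ C.alg.d u = 0

/-- Cone (of multiplication by 2) boundaries. -/
def CBdry (C : S2Algebra ℤ) (z u : C.alg.X) : Prop :=
  ∃ a b, z = C.alg.d a + (2:ℤ) • b ∧ u = -C.alg.d b

lemma CBdry_sub {C : S2Algebra ℤ} {x y x' y' : C.alg.X} (h : CBdry C x y)
    (h' : CBdry C x' y') : CBdry C (x - x') (y - y') := by
  obtain ⟨a, b, e1, e2⟩ := h
  obtain ⟨a', b', e1', e2'⟩ := h'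
  refine ⟨a - a', b - b', ?_, ?_⟩
  · rw [e1, e1', map_sub, smul_sub]; abel
  · rw [e2, e2', map_sub]; abel

lemma CBdry_add {C : S2Algebra ℤ} {x y x' y' : C.alg.X} (h : CBdry C x y)
    (h' : CBdry C x' y') : CBdry C (x + x') (y + y') := by
  obtain ⟨a, b, e1, e2⟩ := h
  obtain ⟨a', b', e1', e2'⟩ := h'
  refine ⟨a + a', b + b', ?_, ?_⟩
  · rw [e1, e1', map_add, smul_add]; abel
  · rw [e2, e2', map_add]; abel

lemma CBdry_of_eq {C : S2Algebra ℤ} {x y x' y' : C.alg.X} (h : CBdry C x y)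
    (hx : x = x') (hy : y = y') : CBdry C x' y' := hx ▸ hy ▸ h

section DB

variable (C : S2Algebra ℤ)

lemma dB_mm (x y : C.alg.X) (hx : x ∈ C.alg.grading (-1)) (hy : y ∈ C.alg.grading (-1)) :
    C.alg.d (C.br.brace x [y]) =
      -(x * y) - y * x - C.br.brace (C.alg.d x) [y] + C.br.brace x [C.alg.d y] := by
  have h := dBrace1 C hx hy
  rw [show ((-1:ℤ) * -1) = 1 by norm_num, show ((1:ℤ) + -1) = 0 by norm_num,
    ksgn_one, ksgn_zero, neg_smul, one_smul] at h
  rw [h]; abel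

lemma dB_m0 (x y : C.alg.X) (hx : x ∈ C.alg.grading (-1)) (hy : y ∈ C.alg.grading 0) :
    C.alg.d (C.br.brace x [y]) =
      -(x * y) + y * x - C.br.brace (C.alg.d x) [y] + C.br.brace x [C.alg.d y] := by
  have h := dBrace1 C hx hy
  rw [show ((-1:ℤ) * 0) = 0 by norm_num, show ((1:ℤ) + -1) = 0 by norm_num,
    ksgn_zero, one_smul, one_smul] at h
  rw [h]

lemma dB_0m (x y : C.alg.X) (hx : x ∈ C.alg.grading 0) (hy : y ∈ C.alg.grading (-1)) :
    C.alg.d (C.br.brace x [y]) =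
      -(x * y) + y * x - C.br.brace (C.alg.d x) [y] - C.br.brace x [C.alg.d y] := by
  have h := dBrace1 C hx hy
  rw [show ((0:ℤ) * -1) = 0 by norm_num, show ((1:ℤ) + 0) = 1 by norm_num,
    ksgn_zero, ksgn_one, one_smul, neg_smul, one_smul] at h
  rw [h]; abel

lemma dB_uz (x y : C.alg.X) (hx : x ∈ C.alg.grading (-2)) (hy : y ∈ C.alg.grading (-1)) :
    C.alg.d (C.br.brace x [y]) =
      -(x * y) + y * x - C.br.brace (C.alg.d x) [y] - C.br.brace x [C.alg.d y] := by
  have h := dBrace1 C hx hy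
  rw [show ((-2:ℤ) * -1) = 2 by norm_num, show ((1:ℤ) + -2) = -1 by norm_num,
    ksgn_two, ksgn_neg_one, one_smul, neg_smul, one_smul] at h
  rw [h]; abel

lemma dB_zu (x y : C.alg.X) (hx : x ∈ C.alg.grading (-1)) (hy : y ∈ C.alg.grading (-2)) :
    C.alg.d (C.br.brace x [y]) =
      -(x * y) + y * x - C.br.brace (C.alg.d x) [y] + C.br.brace x [C.alg.d y] := by
  have h := dBrace1 C hx hy
  rw [show ((-1:ℤ) * -2) = 2 by norm_num, show ((1:ℤ) + -1) = 0 by norm_num,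
    ksgn_two, ksgn_zero, one_smul, one_smul] at h
  rw [h]

lemma dB_u0 (x y : C.alg.X) (hx : x ∈ C.alg.grading (-2)) (hy : y ∈ C.alg.grading 0) :
    C.alg.d (C.br.brace x [y]) =
      -(x * y) + y * x - C.br.brace (C.alg.d x) [y] - C.br.brace x [C.alg.d y] := by
  have h := dBrace1 C hx hy
  rw [show ((-2:ℤ) * 0) = 0 by norm_num, show ((1:ℤ) + -2) = -1 by norm_num,
    ksgn_zero, ksgn_neg_one, one_smul, neg_smul, one_smul] at h
  rw [h]; abel

lemma dB_0u (x y : C.alg.X) (hx : x ∈ C.alg.grading 0) (hy : y ∈ C.alg.grading (-2)) :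
    C.alg.d (C.br.brace x [y]) =
      -(x * y) + y * x - C.br.brace (C.alg.d x) [y] - C.br.brace x [C.alg.d y] := by
  have h := dBrace1 C hx hy
  rw [show ((0:ℤ) * -2) = 0 by norm_num, show ((1:ℤ) + 0) = 1 by norm_num,
    ksgn_zero, ksgn_one, one_smul, neg_smul, one_smul] at h
  rw [h]; abel

end DB

/-- Well-definedness of `Sq⁰` on the homology of the cone of multiplication by `2`. -/
lemma WD (C : S2Algebra ℤ) {z u a b : C.alg.X}
    (hz : z ∈ C.alg.grading (-1)) (hu : u ∈ C.alg.grading (-2))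
    (ha : a ∈ C.alg.grading 0) (hb : b ∈ C.alg.grading (-1))
    (h1 : C.alg.d z + (2:ℤ) • u = 0) (h2 : C.alg.d u = 0) :
    CBdry C
      (C.br.brace z [z] -
        C.br.brace (z - (C.alg.d a + (2:ℤ) • b)) [z - (C.alg.d a + (2:ℤ) • b)])
      ((z * z - C.br.brace u [z] + C.br.brace z [u]) -
        ((z - (C.alg.d a + (2:ℤ) • b)) * (z - (C.alg.d a + (2:ℤ) • b)) -
          C.br.brace (u + C.alg.d b) [z - (C.alg.d a + (2:ℤ) • b)] +
          C.br.brace (z - (C.alg.d a + (2:ℤ) • b)) [u + C.alg.d b])) := by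
  have hdz : C.alg.d z = -((2:ℤ) • u) := eq_neg_of_add_eq_zero_left h1
  have hda : C.alg.d a ∈ C.alg.grading (-1) := by simpa using C.alg.d_mem ha
  have hdb : C.alg.d b ∈ C.alg.grading (-2) := by simpa using C.alg.d_mem hb
  have hdda : C.alg.d (C.alg.d a) = 0 := C.alg.d_sq a
  have hddb : C.alg.d (C.alg.d b) = 0 := C.alg.d_sq b
  have E1 : C.alg.d (C.br.brace z [a]) =
      -(z * a) + a * z + (2:ℤ) • C.br.brace u [a] + C.br.brace z [C.alg.d a] := by
    have h := dB_m0 C z a hz ha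
    rw [hdz, brl_neg, brl_smul] at h
    rw [h]; abel
  have E2 : C.alg.d (C.br.brace a [z]) =
      -(a * z) + z * a - C.br.brace (C.alg.d a) [z] + (2:ℤ) • C.br.brace a [u] := by
    have h := dB_0m C a z ha hz
    rw [hdz, br1_neg, br1_smul] at h
    rw [h]; abel
  have E3 : C.alg.d (C.br.brace a [C.alg.d a]) =
      -(a * C.alg.d a) + C.alg.d a * a - C.br.brace (C.alg.d a) [C.alg.d a] := by
    have h := dB_0m C a (C.alg.d a) ha hda
    rw [hdda, br1_zero] at h
    rw [h]; abel
  have E4 : C.alg.d (C.br.brace z [b]) =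
      -(z * b) - b * z + (2:ℤ) • C.br.brace u [b] + C.br.brace z [C.alg.d b] := by
    have h := dB_mm C z b hz hb
    rw [hdz, brl_neg, brl_smul] at h
    rw [h]; abel
  have E5 : C.alg.d (C.br.brace b [z]) =
      -(b * z) - z * b - C.br.brace (C.alg.d b) [z] - (2:ℤ) • C.br.brace b [u] := by
    have h := dB_mm C b z hb hz
    rw [hdz, br1_neg, br1_smul] at h
    rw [h]; abel
  have E6 : C.alg.d (C.br.brace (C.alg.d a) [b]) =
      -(C.alg.d a * b) - b * C.alg.d a + C.br.brace (C.alg.d a) [C.alg.d b] := by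
    have h := dB_mm C (C.alg.d a) b hda hb
    rw [hdda, brl_zero] at h
    rw [h]; abel
  have E7 : C.alg.d (C.br.brace b [C.alg.d a]) =
      -(b * C.alg.d a) - C.alg.d a * b - C.br.brace (C.alg.d b) [C.alg.d a] := by
    have h := dB_mm C b (C.alg.d a) hb hda
    rw [hdda, br1_zero] at h
    rw [h]; abel
  have E8 : C.alg.d (C.br.brace b [b]) =
      -(b * b) - b * b - C.br.brace (C.alg.d b) [b] + C.br.brace b [C.alg.d b] :=
    dB_mm C b b hb hb
  have E9 : C.alg.d (C.br.brace u [a]) =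
      -(u * a) + a * u - C.br.brace u [C.alg.d a] := by
    have h := dB_u0 C u a hu ha
    rw [h2, brl_zero] at h
    rw [h]; abel
  have E10 : C.alg.d (C.br.brace a [u]) =
      -(a * u) + u * a - C.br.brace (C.alg.d a) [u] := by
    have h := dB_0u C a u ha hu
    rw [h2, br1_zero] at h
    rw [h]; abel
  have E11 : C.alg.d (z * a) = -((2:ℤ) • (u * a)) - z * C.alg.d a := by
    rw [C.alg.leibniz hz a, hdz, ksgn_neg_one, neg_smul, one_smul, neg_mul, smul_mul_assoc]
    abel
  have E12 : C.alg.d (a * z) = C.alg.d a * z - (2:ℤ) • (a * u) := by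
    rw [C.alg.leibniz ha z, ksgn_zero, one_smul, hdz, mul_neg, mul_smul_comm]
    abel
  have E13 : C.alg.d (a * C.alg.d a) = C.alg.d a * C.alg.d a := by
    rw [C.alg.leibniz ha (C.alg.d a), ksgn_zero, one_smul, hdda, mul_zero, add_zero]
  have E14 : C.alg.d (a * a) = C.alg.d a * a + a * C.alg.d a := by
    rw [C.alg.leibniz ha a, ksgn_zero, one_smul]
  refine ⟨C.br.brace z [a] - C.br.brace a [z] + C.br.brace a [C.alg.d a] - a * a,
      z * a - a * z - C.br.brace u [a] + C.br.brace a [u] + a * C.alg.d a +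
        C.br.brace z [b] + C.br.brace b [z] - C.br.brace (C.alg.d a) [b] -
        C.br.brace b [C.alg.d a] - (2:ℤ) • C.br.brace b [b], ?_, ?_⟩
  · simp only [map_sub, map_add]
    rw [E1, E2, E3, E14]
    simp only [brl_sub, br1_sub, C.br.brace_addl, br1_add, brl_smul, br1_smul]
    abel
  · simp only [map_sub, map_add, map_zsmul]
    rw [E11, E12, E9, E10, E13, E4, E5, E6, E7, E8]
    simp only [sub_mul, mul_sub, add_mul, mul_add, smul_mul_assoc, mul_smul_comm,
      brl_sub, br1_sub, C.br.brace_addl, br1_add, brl_smul, br1_smul]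
    abel

/-- `Sq` of a graded cone cycle is a cone cycle. -/
lemma sq_ccyc (C : S2Algebra ℤ) {z u : C.alg.X}
    (hz : z ∈ C.alg.grading (-1)) (hu : u ∈ C.alg.grading (-2))
    (h1 : C.alg.d z + (2:ℤ) • u = 0) (h2 : C.alg.d u = 0) :
    C.alg.d (C.br.brace z [z]) +
        (2:ℤ) • (z * z - C.br.brace u [z] + C.br.brace z [u]) = 0 ∧
      C.alg.d (z * z - C.br.brace u [z] + C.br.brace z [u]) = 0 := by
  have hdz : C.alg.d z = -((2:ℤ) • u) := eq_neg_of_add_eq_zero_left h1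
  constructor
  · have h := dB_mm C z z hz hz
    rw [hdz, brl_neg, brl_smul, br1_neg, br1_smul] at h
    rw [h]
    simp only [smul_sub, smul_add]
    abel
  · have hA : C.alg.d (z * z) = -((2:ℤ) • (u * z)) + (2:ℤ) • (z * u) := by
      rw [C.alg.leibniz hz z, ksgn_neg_one, neg_smul, one_smul, hdz, neg_mul,
        mul_neg, smul_mul_assoc, mul_smul_comm]
      abel
    have hB : C.alg.d (C.br.brace u [z]) =
        -(u * z) + z * u + (2:ℤ) • C.br.brace u [u] := by
      have h := dB_uz C u z hu hz
      rw [h2, brl_zero, hdz, br1_neg, br1_smul] at h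
      rw [h]; abel
    have hC : C.alg.d (C.br.brace z [u]) =
        -(z * u) + u * z + (2:ℤ) • C.br.brace u [u] := by
      have h := dB_zu C z u hz hu
      rw [h2, br1_zero, hdz, brl_neg, brl_smul] at h
      rw [h]; abel
    rw [map_add, map_sub, hA, hB, hC]
    abel

lemma pr_d' (C : DGAlgebra ℤ) (i j : ℤ) (h : i = j - 1) (x : C.X) :
    pr C i (C.d x) = C.d (pr C j x) := by subst h; exact pr_d C j x

/-- The quasi-isomorphism invariant: existence of a nonzero mod-2 degree `-1`
cone-homology class fixed by `Sq⁰`. -/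
def Inv (C : S2Algebra ℤ) : Prop :=
  ∃ z u : C.alg.X, z ∈ C.alg.grading (-1) ∧ u ∈ C.alg.grading (-2) ∧
    C.alg.d z + (2:ℤ) • u = 0 ∧ C.alg.d u = 0 ∧
    ¬ CBdry C z u ∧
    CBdry C (C.br.brace z [z] - z)
      (z * z - C.br.brace u [z] + C.br.brace z [u] - u)

section Chase

variable {C D : S2Algebra ℤ}

/-- The type of the quasi-isomorphism hypothesis exactly as it appears in `S2ZigZag`. -/
abbrev QQ {C D : S2Algebra ℤ} (f : S2AlgHom C D) : Prop :=
  @QIso ℤ _ C.alg.X D.alg.X _ Algebra.toModule _ Algebra.toModule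
    C.alg.d D.alg.d f.f.toLinearMap

lemma map_brace1 (f : S2AlgHom C D) (x y : C.alg.X) :
    f.f (C.br.brace x [y]) = D.br.brace (f.f x) [f.f y] := by
  simpa using f.map_brace x [y]

/-- Injectivity of the map induced on homology of the cone of multiplication by `2`. -/
lemma coneInj (f : S2AlgHom C D) (hf : QQ f)
    {v m : C.alg.X} (hc1 : C.alg.d v + (2:ℤ) • m = 0) (hc2 : C.alg.d m = 0)
    (hb : CBdry D (f.f v) (f.f m)) : CBdry C v m := by
  obtain ⟨hcomm, hsur, hinj⟩ := hf
  have hco : ∀ x, f.f (C.alg.d x) = D.alg.d (f.f x) := fun x => by simpa using hcomm x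
  have hs : ∀ y, D.alg.d y = 0 → ∃ x z, C.alg.d x = 0 ∧ y = f.f x + D.alg.d z := by
    intro y hy; simpa using hsur y hy
  have hi : ∀ x, C.alg.d x = 0 → (∃ z, f.f x = D.alg.d z) → ∃ w, x = C.alg.d w := by
    intro x h1 h2
    exact hinj x h1 (by simpa using h2)
  obtain ⟨p, q, hp, hq⟩ := hb
  obtain ⟨w, hw⟩ : ∃ w, m = C.alg.d w := by
    refine hi m hc2 ⟨-q, ?_⟩
    rw [map_neg, ← hq]
  have hc : D.alg.d (q + f.f w) = 0 := by
    rw [map_add, ← hco w, ← hw, hq]; abel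
  obtain ⟨k, n, hk, hkn⟩ := hs (q + f.f w) hc
  have h5 : C.alg.d (v + (2:ℤ) • w - (2:ℤ) • k) = 0 := by
    rw [map_sub, map_add, map_zsmul, map_zsmul, hk, smul_zero, sub_zero, ← hw]
    exact hc1
  have hw2 : f.f w = f.f k + D.alg.d n - q := by rw [← hkn]; abel
  have h6 : f.f (v + (2:ℤ) • w - (2:ℤ) • k) = D.alg.d (p + (2:ℤ) • n) := by
    rw [map_sub, map_add, map_zsmul, map_zsmul, map_add, map_zsmul, hp, hw2]
    simp only [smul_add, smul_sub]
    abel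
  obtain ⟨α, hα⟩ := hi _ h5 ⟨_, h6⟩
  refine ⟨α, k - w, ?_, ?_⟩
  · rw [← hα]; simp only [smul_sub]; abel
  · rw [map_sub, hk, ← hw]; abel

/-- Surjectivity of the map induced on homology of the cone of multiplication by `2`. -/
lemma coneSur (f : S2AlgHom C D) (hf : QQ f)
    {z' u' : D.alg.X} (h1 : D.alg.d z' + (2:ℤ) • u' = 0)
    (h2 : D.alg.d u' = 0) :
    ∃ z u p q, (C.alg.d z + (2:ℤ) • u = 0) ∧ C.alg.d u = 0 ∧
      z' = f.f z + D.alg.d p + (2:ℤ) • q ∧ u' = f.f u - D.alg.d q := by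
  obtain ⟨hcomm, hsur, hinj⟩ := hf
  have hco : ∀ x, f.f (C.alg.d x) = D.alg.d (f.f x) := fun x => by simpa using hcomm x
  have hs : ∀ y, D.alg.d y = 0 → ∃ x z, C.alg.d x = 0 ∧ y = f.f x + D.alg.d z := by
    intro y hy; simpa using hsur y hy
  have hi : ∀ x, C.alg.d x = 0 → (∃ z, f.f x = D.alg.d z) → ∃ w, x = C.alg.d w := by
    intro x hx h2'
    exact hinj x hx (by simpa using h2')
  have hdz' : D.alg.d z' = -((2:ℤ) • u') := eq_neg_of_add_eq_zero_left h1
  obtain ⟨u₀, m, hu₀, hm⟩ := hs u' h2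
  have h4 : C.alg.d ((-2:ℤ) • u₀) = 0 := by rw [map_zsmul, hu₀, smul_zero]
  have h3 : f.f ((-2:ℤ) • u₀) = D.alg.d (z' + (2:ℤ) • m) := by
    rw [map_zsmul, map_add, map_zsmul, hdz', hm]
    simp only [smul_add]
    abel
  obtain ⟨z₁, hz₁⟩ := hi _ h4 ⟨_, h3⟩
  have e1 : D.alg.d (f.f z₁) = (-2:ℤ) • f.f u₀ := by rw [← hco, ← hz₁, map_zsmul]
  have h5 : D.alg.d (f.f z₁ - (z' + (2:ℤ) • m)) = 0 := by
    rw [map_sub, map_add, map_zsmul, e1, hdz', hm]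
    simp only [smul_add]
    abel
  obtain ⟨k, n, hk, hkn⟩ := hs _ h5
  refine ⟨z₁ - k, u₀, -n, -m, ?_, hu₀, ?_, ?_⟩
  · rw [map_sub, ← hz₁, hk]; abel
  · have hfz : f.f z₁ = f.f k + D.alg.d n + (z' + (2:ℤ) • m) := by rw [← hkn]; abel
    rw [map_sub, hfz, map_neg]
    simp only [smul_neg]
    abel
  · rw [map_neg, sub_neg_eq_add]; exact hm

lemma edgeFwd (f : S2AlgHom C D) (hf : QQ f)
    (h : Inv C) : Inv D := by
  obtain ⟨z, u, hgz, hgu, hc1, hc2, hnb, hbd⟩ := h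
  refine ⟨f.f z, f.f u, f.map_grading hgz, f.map_grading hgu, ?_, ?_, ?_, ?_⟩
  · rw [← f.map_d, ← map_zsmul, ← map_add, hc1, map_zero]
  · rw [← f.map_d, hc2, map_zero]
  · intro hbdD
    exact hnb (coneInj f hf hc1 hc2 hbdD)
  · obtain ⟨p, q, e1, e2⟩ := hbd
    refine ⟨f.f p, f.f q, ?_, ?_⟩
    · have h' := congrArg f.f e1
      simp only [map_sub, map_add, map_zsmul, map_brace1 f, f.map_d] at h'
      exact h'
    · have h' := congrArg f.f e2
      simp only [map_sub, map_add, map_neg, map_mul, map_zsmul, map_brace1 f, f.map_d] at h'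
      exact h'

lemma edgeBwd (f : S2AlgHom C D) (hf : QQ f)
    (h : Inv D) : Inv C := by
  obtain ⟨z', u', hgz', hgu', hc1', hc2', hnb', hbd'⟩ := h
  have hmap : ∀ (i : ℤ) (x : C.alg.X), pr D.alg i (f.f x) = f.f (pr C.alg i x) := by
    intro i x
    have h' := pr_map (f.f.toRingHom.toAddMonoidHom)
      (fun i x hx => f.map_grading hx) i x
    exact h' 
  have pack : ∃ z₁ u₁ : C.alg.X, ∃ p₀ q₁ : D.alg.X,
      z₁ ∈ C.alg.grading (-1) ∧ u₁ ∈ C.alg.grading (-2) ∧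
      p₀ ∈ D.alg.grading 0 ∧ q₁ ∈ D.alg.grading (-1) ∧
      C.alg.d z₁ + (2:ℤ) • u₁ = 0 ∧ C.alg.d u₁ = 0 ∧
      z' = f.f z₁ + D.alg.d p₀ + (2:ℤ) • q₁ ∧ u' = f.f u₁ - D.alg.d q₁ := by
    obtain ⟨z, u, p, q, hcz, hcu, hA, hB⟩ := coneSur f hf hc1' hc2'
    refine ⟨pr C.alg (-1) z, pr C.alg (-2) u, pr D.alg 0 p, pr D.alg (-1) q,
      pr_mem _ _ _, pr_mem _ _ _, pr_mem _ _ _, pr_mem _ _ _, ?_, ?_, ?_, ?_⟩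
    · have h' := congrArg (pr C.alg (-2)) hcz
      rw [map_add, map_zsmul, map_zero, pr_d' C.alg (-2) (-1) (by norm_num)] at h'
      exact h'
    · have h' := congrArg (pr C.alg (-3)) hcu
      rw [map_zero, pr_d' C.alg (-3) (-2) (by norm_num)] at h'
      exact h'
    · have h' := congrArg (pr D.alg (-1)) hA
      rw [pr_same D.alg hgz', map_add, map_add, map_zsmul, hmap,
        pr_d' D.alg (-1) 0 (by norm_num)] at h'
      exact h'
    · have h' := congrArg (pr D.alg (-2)) hB
      rw [pr_same D.alg hgu', map_sub, hmap, pr_d' D.alg (-2) (-1) (by norm_num)] at h'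
      exact h'
  obtain ⟨z₁, u₁, p₀, q₁, hgz₁, hgu₁, hgp₀, hgq₁, hccz, hccu, hA₁, hB₁⟩ := pack
  have hwd := WD D hgz' hgu' hgp₀ hgq₁ hc1' hc2'
  have e1 : z' - (D.alg.d p₀ + (2:ℤ) • q₁) = f.f z₁ := by rw [hA₁]; abel
  have e2 : u' + D.alg.d q₁ = f.f u₁ := by rw [hB₁]; abel
  rw [e1, e2] at hwd
  have h3 : CBdry D (z' - f.f z₁) (u' - f.f u₁) :=
    ⟨p₀, q₁, by rw [hA₁]; abel, by rw [hB₁]; abel⟩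
  have hbig := CBdry_add (CBdry_sub hbd' hwd) h3
  have hgoal : CBdry D (f.f (C.br.brace z₁ [z₁] - z₁))
      (f.f (z₁ * z₁ - C.br.brace u₁ [z₁] + C.br.brace z₁ [u₁] - u₁)) := by
    apply CBdry_of_eq hbig
    · simp only [map_sub, map_brace1 f]
      abel
    · simp only [map_sub, map_add, map_mul, map_brace1 f]
      abel
  have hsq := sq_ccyc C hgz₁ hgu₁ hccz hccu
  have hcyc1 : C.alg.d (C.br.brace z₁ [z₁] - z₁) +
      (2:ℤ) • (z₁ * z₁ - C.br.brace u₁ [z₁] + C.br.brace z₁ [u₁] - u₁) = 0 := by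
    have hre : C.alg.d (C.br.brace z₁ [z₁] - z₁) +
        (2:ℤ) • (z₁ * z₁ - C.br.brace u₁ [z₁] + C.br.brace z₁ [u₁] - u₁) =
        (C.alg.d (C.br.brace z₁ [z₁]) +
          (2:ℤ) • (z₁ * z₁ - C.br.brace u₁ [z₁] + C.br.brace z₁ [u₁])) -
        (C.alg.d z₁ + (2:ℤ) • u₁) := by
      rw [map_sub, smul_sub]; abel
    rw [hre, hsq.1, hccz, sub_zero]
  have hcyc2 : C.alg.d (z₁ * z₁ - C.br.brace u₁ [z₁] + C.br.brace z₁ [u₁] - u₁) = 0 := by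
    rw [map_sub, hsq.2, hccu, sub_zero]
  refine ⟨z₁, u₁, hgz₁, hgu₁, hccz, hccu, ?_, coneInj f hf hcyc1 hcyc2 hgoal⟩
  intro hbdC
  obtain ⟨α, β, e1', e2'⟩ := hbdC
  refine hnb' ⟨f.f α + p₀, f.f β + q₁, ?_, ?_⟩
  · rw [hA₁, e1', map_add, map_zsmul, f.map_d, map_add, smul_add]
    abel
  · rw [hB₁, e2', map_neg, f.map_d, map_add]
    abel

lemma edge_iff (f : S2AlgHom C D) (hf : QQ f) :
    Inv C ↔ Inv D := ⟨edgeFwd f hf, edgeBwd f hf⟩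

end Chase

lemma zig {A B : S2Algebra ℤ} (h : S2ZigZag A B) : Inv A ↔ Inv B := by
  induction h with
  | refl _ => exact Iff.rfl
  | fwd f hf _ ih => exact (edge_iff f hf).trans ih
  | bwd f hf _ ih => exact ((edge_iff f hf).symm).trans ih

lemma invA (A : S2Algebra ℤ) (x : A.alg.X) (hA : IsS1Cochains A x) : Inv A := by
  obtain ⟨hd, hgx, hg0, hg1, hgo, htor, htor1, hxx, hbr, hbr2⟩ := hA
  refine ⟨x, 0, hgx, Submodule.zero_mem _, ?_, ?_, ?_, ?_⟩
  · rw [hd]; simp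
  · rw [hd]; simp
  · rintro ⟨a, b, e1, e2⟩
    rw [hd] at e1
    simp only [LinearMap.zero_apply, zero_add] at e1
    have hb1 := pr_mem A.alg (-1) b
    obtain ⟨n, hn⟩ := (hg1 _).mp hb1
    have h' := congrArg (pr A.alg (-1)) e1
    rw [pr_same A.alg hgx, map_zsmul, hn] at h'
    have h0 : (1 - 2 * n) • x = 0 := by
      rw [sub_smul, one_smul, mul_smul, ← h', sub_self]
    have hn0 : 1 - 2 * n = 0 := htor _ h0
    omega
  · refine ⟨0, -x, ?_, ?_⟩
    · rw [hbr, hd]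
      simp only [LinearMap.zero_apply, zero_add, smul_neg]
      abel
    · rw [hd]
      simp only [LinearMap.zero_apply, neg_zero]
      rw [hxx, brl_zero, br1_zero]
      simp

lemma notInvB (B : S2Algebra ℤ) (hB : IsCommTrivialBraces B) : ¬ Inv B := by
  rintro ⟨z, u, hgz, hgu, hc1, hc2, hnb, hbd⟩
  have htr := hB.2
  obtain ⟨a, b, e1, e2⟩ := hbd
  rw [htr z [z] (by simp)] at e1
  rw [htr u [z] (by simp), htr z [u] (by simp)] at e2
  have e1' : -z = B.alg.d a + (2:ℤ) • b := by rw [← e1]; abel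
  have e2' : z * z - u = -B.alg.d b := by rw [← e2]; abel
  have hz2 : z * z ∈ B.alg.grading (-2) := by
    have h' := B.alg.mul_mem hgz hgz
    norm_num at h'
    exact h'
  have f1 : -z = B.alg.d (pr B.alg 0 a) + (2:ℤ) • pr B.alg (-1) b := by
    have h' := congrArg (pr B.alg (-1)) e1'
    rw [map_neg, pr_same B.alg hgz, map_add, map_zsmul,
      pr_d' B.alg (-1) 0 (by norm_num)] at h'
    exact h'
  have f2 : z * z - u = -B.alg.d (pr B.alg (-1) b) := by
    have h' := congrArg (pr B.alg (-2)) e2'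
    rw [map_sub, pr_same B.alg hz2, pr_same B.alg hgu, map_neg,
      pr_d' B.alg (-2) (-1) (by norm_num)] at h'
    exact h'
  have hga : -pr B.alg 0 a ∈ B.alg.grading 0 := neg_mem (pr_mem _ _ _)
  have hgb : -pr B.alg (-1) b ∈ B.alg.grading (-1) := neg_mem (pr_mem _ _ _)
  have hwd := WD B hgz hgu hga hgb hc1 hc2
  have g1 : z - (B.alg.d (-pr B.alg 0 a) + (2:ℤ) • (-pr B.alg (-1) b)) = 0 := by
    rw [map_neg, smul_neg]
    rw [show (-(B.alg.d (pr B.alg 0 a)) + -((2:ℤ) • pr B.alg (-1) b)) =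
      -(B.alg.d (pr B.alg 0 a) + (2:ℤ) • pr B.alg (-1) b) from by abel, ← f1]
    abel
  have g2 : u + B.alg.d (-pr B.alg (-1) b) = z * z := by
    rw [map_neg, f2.symm]
    abel
  rw [g1, g2] at hwd
  obtain ⟨A₁, B₁, k1, k2⟩ := hwd
  rw [htr z [z] (by simp), htr (0 : B.alg.X) [0] (by simp)] at k1
  rw [htr u [z] (by simp), htr z [u] (by simp), htr (z * z) [(0 : B.alg.X)] (by simp),
    htr (0 : B.alg.X) [z * z] (by simp)] at k2
  have k1' : B.alg.d A₁ + (2:ℤ) • B₁ = 0 := by rw [← k1]; abel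
  have k2' : z * z = -B.alg.d B₁ := by
    rw [← k2]
    simp
  refine hnb ⟨A₁ - pr B.alg 0 a, B₁ - pr B.alg (-1) b, ?_, ?_⟩
  · have hre : B.alg.d (A₁ - pr B.alg 0 a) + (2:ℤ) • (B₁ - pr B.alg (-1) b) =
        (B.alg.d A₁ + (2:ℤ) • B₁) -
          (B.alg.d (pr B.alg 0 a) + (2:ℤ) • pr B.alg (-1) b) := by
      rw [map_sub, smul_sub]; abel
    rw [hre, k1', ← f1]
    abel
  · rw [map_sub, neg_sub]
    have hdb : B.alg.d (pr B.alg (-1) b) = u - z * z := by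
      have h2 := congrArg (fun t : B.alg.X => -t) f2
      simp only [neg_neg] at h2
      rw [← h2]; abel
    rw [hdb, k2']
    abel

end KM

/-- **Statement 3 (Kuhn–Mandell).** The simplicial cochain `S₂`-algebra `S^*(S¹, ℤ)` is
not weakly equivalent, as an `S₂`-algebra, to any commutative dg algebra with trivial
braces (in particular not to its cohomology `H^*(S¹, ℤ)`).  Indeed, mod `2` the operation
`Sq⁰(z) = z{z}` satisfies `Sq⁰([x]) = [x] ≠ 0` on the reduction of `S^*(S¹, ℤ)`, while
`Sqⁿ⁻¹` vanishes identically on any commutative algebra with trivial braces. -/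
theorem circle_cochains_not_formal
    (A : S2Algebra ℤ) (x : A.alg.X) (hA : IsS1Cochains A x) :
    (∀ B : S2Algebra ℤ, IsCommTrivialBraces B → ¬ S2ZigZag A B) ∧
      (∀ (A₂ : S2Algebra (ZMod 2)) (x₂ : A₂.alg.X), IsS1CochainsMod2 A₂ x₂ →
        A₂.br.brace x₂ [x₂] = x₂ ∧ x₂ ≠ 0) ∧
      (∀ B₂ : S2Algebra (ZMod 2), IsCommTrivialBraces B₂ →
        ∀ z : B₂.alg.X, B₂.br.brace z [z] = 0) := by
  refine ⟨?_, ?_, ?_⟩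
  · intro B hB hzz
    exact KM.notInvB B hB ((KM.zig hzz).mp (KM.invA A x hA))
  · intro A₂ x₂ h
    obtain ⟨hd2, hg2, hchar, hne, hxx2, hbr2⟩ := h
    refine ⟨?_, hne⟩
    rw [hbr2]
    have hsum : x₂ + x₂ = 0 := by
      have h2 : ((2 : ZMod 2)) • x₂ = x₂ + x₂ := two_smul _ _
      rw [show (2 : ZMod 2) = 0 from by decide, zero_smul] at h2
      exact h2.symm
    exact neg_eq_of_add_eq_zero_left hsum
  · intro B₂ hB₂ z
    exact hB₂.2 z [z] (by simp)
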